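/- (Theorem 1) Let (x, y) be a pair of unimodular complex sequences of length N forming a Golay complementary pair, and let (a, b) be a pair of unimodular complex sequences of length L forming an (L, Z)-Z-complementary pair, where 1 ≤ Z ≤ L. Define four L×N complex arrays by X₁[i,j] = a_i·x_j, X₂[i,j] = b_i·y_j, X₃[i,j] = −a_i·conj(y_{N-1-j}), and X₄[i,j] = b_i·conj(x_{N-1-j}). Then {X₁, X₂, X₃, X₄} is a 2D Z-complementary array quad with array size L×N and 2D zero-correlation-zone width Z×N; that is, each array is unimodular, ρ_{X₁}(0,0) + ρ_{X₂}(0,0) + ρ_{X₃}(0,0) + ρ_{X₄}(0,0) = 4LN, and for all integer shifts (τ₁, τ₂) ≠ (0,0) with |τ₁| ≤ Z−1 and |τ₂| ≤ N−1, ρ_{X₁}(τ₁,τ₂) + ρ_{X₂}(τ₁,τ₂) + ρ_{X₃}(τ₁,τ₂) + ρ_{X₄}(τ₁,τ₂) = 0. -/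

import Mathlib

open Finset

noncomputable section

/-- 1D aperiodic autocorrelation of a length-`N` complex sequence at integer shift `τ`:
`ρ_x(τ) = Σ x_j * conj (x_{j+τ})`, summed over all `j` with `j` and `j + τ` in `[0, N)`. -/
def acorr (N : ℕ) (x : ℕ → ℂ) (τ : ℤ) : ℂ :=
  ∑ j ∈ Finset.range N,
    if 0 ≤ (j : ℤ) + τ ∧ (j : ℤ) + τ < (N : ℤ) then
      x j * star (x ((j : ℤ) + τ).toNat)
    else 0

/-- 2D aperiodic autocorrelation of an `N₁ × N₂` complex array at integer shifts `(τ₁, τ₂)`. -/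
def acorr2 (N₁ N₂ : ℕ) (X : ℕ → ℕ → ℂ) (τ₁ τ₂ : ℤ) : ℂ :=
  ∑ i ∈ Finset.range N₁, ∑ j ∈ Finset.range N₂,
    if (0 ≤ (i : ℤ) + τ₁ ∧ (i : ℤ) + τ₁ < (N₁ : ℤ)) ∧
       (0 ≤ (j : ℤ) + τ₂ ∧ (j : ℤ) + τ₂ < (N₂ : ℤ)) then
      X i j * star (X ((i : ℤ) + τ₁).toNat ((j : ℤ) + τ₂).toNat)
    else 0

/-- Peak-to-mean envelope power ratio of a length-`L` complex sequence:
`sup_{t ∈ [0,1]} (1/L) * |Σ_{i<L} c_i exp(2π√-1 i t)|²`. -/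
def pmepr (L : ℕ) (c : ℕ → ℂ) : ℝ :=
  ⨆ t : Set.Icc (0 : ℝ) 1,
    (‖∑ i ∈ Finset.range L,
      c i * Complex.exp (2 * Real.pi * Complex.I * (i : ℂ) * ((t : ℝ) : ℂ))‖) ^ 2 / L

lemma acorr_neg (N : ℕ) (c : ℕ → ℂ) (τ : ℤ) :
    acorr N (fun j => -(c j)) τ = acorr N c τ := by
  unfold acorr
  refine Finset.sum_congr rfl fun j _ => ?_
  split <;> simp

lemma acorr_conj_rev (N : ℕ) (x : ℕ → ℂ) (τ : ℤ) :
    acorr N (fun j => star (x (N - 1 - j))) τ = acorr N x τ := by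
  unfold acorr
  rw [← Finset.sum_filter, ← Finset.sum_filter]
  refine Finset.sum_nbij' (fun j => ((N : ℤ) - 1 - j - τ).toNat)
    (fun m => ((N : ℤ) - 1 - m - τ).toNat) ?_ ?_ ?_ ?_ ?_
  · intro j hj
    simp only [Finset.mem_filter, Finset.mem_range] at hj ⊢
    omega
  · intro m hm
    simp only [Finset.mem_filter, Finset.mem_range] at hm ⊢
    omega
  · intro j hj
    simp only [Finset.mem_filter, Finset.mem_range] at hj
    omega
  · intro m hm
    simp only [Finset.mem_filter, Finset.mem_range] at hm
    omega
  · intro j hj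
    simp only [Finset.mem_filter, Finset.mem_range] at hj
    obtain ⟨hjN, h1, h2⟩ := hj
    have e1 : N - 1 - ((j : ℤ) + τ).toNat = ((N : ℤ) - 1 - j - τ).toNat := by omega
    have e2 : ((((N : ℤ) - 1 - j - τ).toNat : ℤ) + τ).toNat = N - 1 - j := by omega
    rw [star_star, e1, e2, mul_comm]

lemma acorr_neg_conj_rev (N : ℕ) (x : ℕ → ℂ) (τ : ℤ) :
    acorr N (fun j => -(star (x (N - 1 - j)))) τ = acorr N x τ := by
  rw [acorr_neg, acorr_conj_rev]

lemma acorr2_sep (N₁ N₂ : ℕ) (u v : ℕ → ℂ) (τ₁ τ₂ : ℤ) :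
    acorr2 N₁ N₂ (fun i j => u i * v j) τ₁ τ₂ = acorr N₁ u τ₁ * acorr N₂ v τ₂ := by
  unfold acorr2 acorr
  rw [Finset.sum_mul_sum]
  refine Finset.sum_congr rfl fun i _ => Finset.sum_congr rfl fun j _ => ?_
  by_cases h1 : 0 ≤ (i : ℤ) + τ₁ ∧ (i : ℤ) + τ₁ < (N₁ : ℤ) <;>
    by_cases h2 : 0 ≤ (j : ℤ) + τ₂ ∧ (j : ℤ) + τ₂ < (N₂ : ℤ) <;>
    simp [h1, h2, star_mul'] <;> ring

lemma acorr_zero_unimodular (N : ℕ) (x : ℕ → ℂ)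
    (hx : ∀ j < N, ‖x j‖ = 1) : acorr N x 0 = N := by
  unfold acorr
  have h : ∀ j ∈ Finset.range N,
      (if 0 ≤ (j : ℤ) + 0 ∧ (j : ℤ) + 0 < (N : ℤ) then
        x j * star (x ((j : ℤ) + 0).toNat) else 0) = 1 := by
    intro j hj
    simp only [Finset.mem_range] at hj
    rw [if_pos (by omega)]
    simp only [add_zero, Int.toNat_natCast]
    have : (‖x j‖ : ℂ) ^ 2 = 1 := by rw [hx j hj]; norm_num
    rw [show (star (x j) : ℂ) = (starRingEnd ℂ) (x j) from rfl, Complex.mul_conj,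
      Complex.normSq_eq_norm_sq]
    exact_mod_cast this
  rw [Finset.sum_congr rfl h, Finset.sum_const, Finset.card_range, nsmul_eq_mul, mul_one]

/-- Theorem 1: from a unimodular GCP `(x, y)` of length `N` and a
unimodular `(L, Z)`-ZCP `(a, b)`, the four arrays `X₁[i,j] = a_i x_j`,
`X₂[i,j] = b_i y_j`, `X₃[i,j] = -a_i conj (y_{N-1-j})`, `X₄[i,j] = b_i conj (x_{N-1-j})`
form a 2D-ZCAQ of size `L × N` with 2D-ZCZ width `Z × N`. -/
theorem stmt_4 (L N Z : ℕ) (x y a b : ℕ → ℂ)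
    (hx : ∀ j < N, ‖x j‖ = 1) (hy : ∀ j < N, ‖y j‖ = 1)
    (ha : ∀ i < L, ‖a i‖ = 1) (hb : ∀ i < L, ‖b i‖ = 1)
    (hZ1 : 1 ≤ Z) (hZL : Z ≤ L)
    (hGCP : ∀ τ : ℤ, 1 ≤ |τ| → |τ| ≤ (N : ℤ) - 1 → acorr N x τ + acorr N y τ = 0)
    (hZCP : ∀ τ : ℤ, 1 ≤ |τ| → |τ| ≤ (Z : ℤ) - 1 → acorr L a τ + acorr L b τ = 0) :
    (∀ i < L, ∀ j < N,
      ‖a i * x j‖ = 1 ∧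
      ‖b i * y j‖ = 1 ∧
      ‖-(a i * star (y (N - 1 - j)))‖ = 1 ∧
      ‖b i * star (x (N - 1 - j))‖ = 1) ∧
    (acorr2 L N (fun i j => a i * x j) 0 0 +
      acorr2 L N (fun i j => b i * y j) 0 0 +
      acorr2 L N (fun i j => -(a i * star (y (N - 1 - j)))) 0 0 +
      acorr2 L N (fun i j => b i * star (x (N - 1 - j))) 0 0 = 4 * (L : ℂ) * (N : ℂ)) ∧
    (∀ τ₁ τ₂ : ℤ, (τ₁, τ₂) ≠ (0, 0) → |τ₁| ≤ (Z : ℤ) - 1 → |τ₂| ≤ (N : ℤ) - 1 →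
      acorr2 L N (fun i j => a i * x j) τ₁ τ₂ +
        acorr2 L N (fun i j => b i * y j) τ₁ τ₂ +
        acorr2 L N (fun i j => -(a i * star (y (N - 1 - j)))) τ₁ τ₂ +
        acorr2 L N (fun i j => b i * star (x (N - 1 - j))) τ₁ τ₂ = 0) := by
  have e3 : (fun i j => -(a i * star (y (N - 1 - j))))
      = fun i j => a i * (-(star (y (N - 1 - j)))) := by funext i j; ring
  refine ⟨?_, ?_, ?_⟩
  · intro i hi j hj
    have hj' : N - 1 - j < N := by omega
    refine ⟨?_, ?_, ?_, ?_⟩ <;>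
      simp [map_mul, ha i hi, hb i hi, hx j hj, hy j hj, hx _ hj', hy _ hj']
  · rw [e3, acorr2_sep, acorr2_sep, acorr2_sep, acorr2_sep,
      acorr_neg_conj_rev, acorr_conj_rev,
      acorr_zero_unimodular L a ha, acorr_zero_unimodular L b hb,
      acorr_zero_unimodular N x hx, acorr_zero_unimodular N y hy]
    ring
  · intro τ₁ τ₂ hne h1 h2
    rw [e3, acorr2_sep, acorr2_sep, acorr2_sep, acorr2_sep,
      acorr_neg_conj_rev, acorr_conj_rev]
    by_cases hτ2 : τ₂ = 0
    · subst hτ2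
      have hτ1 : τ₁ ≠ 0 := fun h => hne (by rw [h])
      have h := hZCP τ₁ (Int.one_le_abs hτ1) h1
      linear_combination h * (acorr N x 0 + acorr N y 0)
    · have h := hGCP τ₂ (Int.one_le_abs hτ2) h2
      linear_combination h * (acorr L a τ₁ + acorr L b τ₁)

end
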